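/- For fixed 0 < ν < 1, the third derivative of h(ω) = 2(1-ω) + ω²ν + ω√(ν(4-4ω+ω²ν)) on (0,1) equals -24(ω-2)(ν-1)√(ν(ω²ν - 4ω + 4)) / (ω²ν - 4ω + 4)³, which is strictly negative. -/

import Mathlib

private lemma tdn_sqrt_hd (ν x : ℝ) (hp : ν*(x^2*ν-4*x+4) ≠ 0) :
    HasDerivAt (fun y : ℝ => Real.sqrt (ν*(y^2*ν-4*y+4)))
      ((ν*(2*x*ν-4)) / (2*Real.sqrt (ν*(x^2*ν-4*x+4)))) x := by
  have h1 : HasDerivAt (fun y : ℝ => ν*(y^2*ν-4*y+4)) (ν*(2*x*ν-4)) x := by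
    have := ((((hasDerivAt_pow 2 x).mul_const ν).sub ((hasDerivAt_id x).const_mul 4)).add_const 4).const_mul ν
    exact this.congr_deriv (by ring)
  exact h1.sqrt hp

private lemma tdn_eq1 (ν x s : ℝ) (hs0 : 0 < s) (hp : 0 < x^2*ν-4*x+4)
    (hs2 : s^2 = ν*(x^2*ν-4*x+4)) :
    -2 + 2*ν*x + 2*(x^2*ν-3*x+2)*s/(x^2*ν-4*x+4)
    = -2 + 2*x*ν + (1*s + x*((ν*(2*x*ν-4)) / (2*s))) := by
  have key : (ν*(2*x*ν-4)) / (2*s) = (2*x*ν-4)*s/(2*(x^2*ν-4*x+4)) := by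
    rw [div_eq_div_iff (mul_ne_zero two_ne_zero hs0.ne') (mul_ne_zero two_ne_zero hp.ne')]
    linear_combination (-(2*(2*x*ν-4))) * hs2
  rw [key]
  have hq : x^2*ν-4*x+4 ≠ 0 := hp.ne'
  generalize hd : x^2*ν-4*x+4 = d at hq ⊢
  field_simp
  rw [← hd]; ring

private lemma tdn_eq2 (ν x s : ℝ) (hs0 : 0 < s) (hp : 0 < x^2*ν-4*x+4)
    (hs2 : s^2 = ν*(x^2*ν-4*x+4)) :
    2*ν + 2*(x^3*ν^2-6*x^2*ν+6*x*ν+6*x-8)*s/(x^2*ν-4*x+4)^2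
    = 0 + 2*ν + (((2*(2*x*ν-3))*s + (2*(x^2*ν-3*x+2))*((ν*(2*x*ν-4))/(2*s)))*(x^2*ν-4*x+4)
        - (2*(x^2*ν-3*x+2)*s)*(2*x*ν-4)) / (x^2*ν-4*x+4)^2 := by
  have key : (ν*(2*x*ν-4)) / (2*s) = (2*x*ν-4)*s/(2*(x^2*ν-4*x+4)) := by
    rw [div_eq_div_iff (mul_ne_zero two_ne_zero hs0.ne') (mul_ne_zero two_ne_zero hp.ne')]
    linear_combination (-(2*(2*x*ν-4))) * hs2
  rw [key]
  have hq : x^2*ν-4*x+4 ≠ 0 := hp.ne'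
  generalize hd : x^2*ν-4*x+4 = d at hq ⊢
  field_simp
  rw [← hd]; ring

private lemma tdn_eq3 (ν x s : ℝ) (hs0 : 0 < s) (hp : 0 < x^2*ν-4*x+4)
    (hs2 : s^2 = ν*(x^2*ν-4*x+4)) :
    -24*(x-2)*(ν-1)*s/(x^2*ν-4*x+4)^3
    = 0 + (((2*(3*x^2*ν^2-12*x*ν+6*ν+6))*s + (2*(x^3*ν^2-6*x^2*ν+6*x*ν+6*x-8))*((ν*(2*x*ν-4))/(2*s)))*(x^2*ν-4*x+4)^2
        - (2*(x^3*ν^2-6*x^2*ν+6*x*ν+6*x-8)*s)*(2*(x^2*ν-4*x+4)*(2*x*ν-4))) / ((x^2*ν-4*x+4)^2)^2 := by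
  have key : (ν*(2*x*ν-4)) / (2*s) = (2*x*ν-4)*s/(2*(x^2*ν-4*x+4)) := by
    rw [div_eq_div_iff (mul_ne_zero two_ne_zero hs0.ne') (mul_ne_zero two_ne_zero hp.ne')]
    linear_combination (-(2*(2*x*ν-4))) * hs2
  rw [key]
  have hq : x^2*ν-4*x+4 ≠ 0 := hp.ne'
  generalize hd : x^2*ν-4*x+4 = d at hq ⊢
  field_simp
  rw [← hd]; ring

private lemma tdn_hd1 (ν x : ℝ) (hν : 0 < ν) (hp : 0 < x^2*ν-4*x+4) :
    HasDerivAt (fun y : ℝ => 2*(1-y)+y^2*ν+y*Real.sqrt (ν*(y^2*ν-4*y+4)))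
      (-2 + 2*ν*x + 2*(x^2*ν-3*x+2)*Real.sqrt (ν*(x^2*ν-4*x+4))/(x^2*ν-4*x+4)) x := by
  have hνp : 0 < ν*(x^2*ν-4*x+4) := mul_pos hν hp
  set s := Real.sqrt (ν*(x^2*ν-4*x+4)) with hsdef
  have hs0 : 0 < s := Real.sqrt_pos.mpr hνp
  have hs2 : s^2 = ν*(x^2*ν-4*x+4) := Real.sq_sqrt hνp.le
  have hA : HasDerivAt (fun y : ℝ => 2*(1-y)) (-2) x := by
    have := ((hasDerivAt_id x).const_sub 1).const_mul 2
    exact this.congr_deriv (by ring)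
  have hB : HasDerivAt (fun y : ℝ => y^2*ν) (2*x*ν) x := by
    have := (hasDerivAt_pow 2 x).mul_const ν
    exact this.congr_deriv (by ring)
  have hC : HasDerivAt (fun y : ℝ => y*Real.sqrt (ν*(y^2*ν-4*y+4)))
      (1*s + x*((ν*(2*x*ν-4)) / (2*s))) x :=
    (hasDerivAt_id x).mul (tdn_sqrt_hd ν x hνp.ne')
  have H := (hA.add hB).add hC
  exact H.congr_deriv (by linear_combination (tdn_eq1 ν x s hs0 hp hs2).symm)

private lemma tdn_hd2 (ν x : ℝ) (hν : 0 < ν) (hp : 0 < x^2*ν-4*x+4) :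
    HasDerivAt (fun y : ℝ => -2 + 2*ν*y + 2*(y^2*ν-3*y+2)*Real.sqrt (ν*(y^2*ν-4*y+4))/(y^2*ν-4*y+4))
      (2*ν + 2*(x^3*ν^2-6*x^2*ν+6*x*ν+6*x-8)*Real.sqrt (ν*(x^2*ν-4*x+4))/(x^2*ν-4*x+4)^2) x := by
  have hνp : 0 < ν*(x^2*ν-4*x+4) := mul_pos hν hp
  set s := Real.sqrt (ν*(x^2*ν-4*x+4)) with hsdef
  have hs0 : 0 < s := Real.sqrt_pos.mpr hνp
  have hs2 : s^2 = ν*(x^2*ν-4*x+4) := Real.sq_sqrt hνp.le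
  have hA : HasDerivAt (fun y : ℝ => -2 + 2*ν*y) (0 + 2*ν*1) x :=
    (hasDerivAt_const x (-2)).add ((hasDerivAt_id x).const_mul (2*ν))
  have hpoly : HasDerivAt (fun y : ℝ => 2*(y^2*ν-3*y+2)) (2*(2*x*ν-3)) x := by
    have := ((((hasDerivAt_pow 2 x).mul_const ν).sub ((hasDerivAt_id x).const_mul 3)).add_const 2).const_mul 2
    exact this.congr_deriv (by ring)
  have hv : HasDerivAt (fun y : ℝ => y^2*ν-4*y+4) (2*x*ν-4) x := by
    have := (((hasDerivAt_pow 2 x).mul_const ν).sub ((hasDerivAt_id x).const_mul 4)).add_const 4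
    exact this.congr_deriv (by ring)
  have hu := hpoly.mul (tdn_sqrt_hd ν x hνp.ne')
  have H := hA.add (hu.div hv hp.ne')
  exact H.congr_deriv (by simp only [Pi.mul_apply]; linear_combination (tdn_eq2 ν x s hs0 hp hs2).symm)

private lemma tdn_hd3 (ν x : ℝ) (hν : 0 < ν) (hp : 0 < x^2*ν-4*x+4) :
    HasDerivAt (fun y : ℝ => 2*ν + 2*(y^3*ν^2-6*y^2*ν+6*y*ν+6*y-8)*Real.sqrt (ν*(y^2*ν-4*y+4))/(y^2*ν-4*y+4)^2)
      (-24*(x-2)*(ν-1)*Real.sqrt (ν*(x^2*ν-4*x+4))/(x^2*ν-4*x+4)^3) x := by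
  have hνp : 0 < ν*(x^2*ν-4*x+4) := mul_pos hν hp
  set s := Real.sqrt (ν*(x^2*ν-4*x+4)) with hsdef
  have hs0 : 0 < s := Real.sqrt_pos.mpr hνp
  have hs2 : s^2 = ν*(x^2*ν-4*x+4) := Real.sq_sqrt hνp.le
  have hpoly : HasDerivAt (fun y : ℝ => 2*(y^3*ν^2-6*y^2*ν+6*y*ν+6*y-8))
      (2*(3*x^2*ν^2-12*x*ν+6*ν+6)) x := by
    have := ((((((hasDerivAt_pow 3 x).mul_const (ν^2)).sub
      (((hasDerivAt_pow 2 x).const_mul 6).mul_const ν)).add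
      (((hasDerivAt_id x).const_mul 6).mul_const ν)).add
      ((hasDerivAt_id x).const_mul 6)).sub_const 8).const_mul 2
    exact this.congr_deriv (by ring)
  have hvp : HasDerivAt (fun y : ℝ => y^2*ν-4*y+4) (2*x*ν-4) x := by
    have := (((hasDerivAt_pow 2 x).mul_const ν).sub ((hasDerivAt_id x).const_mul 4)).add_const 4
    exact this.congr_deriv (by ring)
  have hv : HasDerivAt (fun y : ℝ => (y^2*ν-4*y+4)^2) (2*(x^2*ν-4*x+4)*(2*x*ν-4)) x := by
    have := hvp.pow 2
    exact this.congr_deriv (by ring)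
  have hu := hpoly.mul (tdn_sqrt_hd ν x hνp.ne')
  have H := (hasDerivAt_const x (2*ν)).add (hu.div hv (by positivity))
  exact H.congr_deriv (by simp only [Pi.mul_apply]; linear_combination (tdn_eq3 ν x s hs0 hp hs2).symm)

theorem third_deriv_neg (ν : ℝ) (hν : 0 < ν) (hν1 : ν < 1) :
    ∀ ω ∈ Set.Ioo (0 : ℝ) 1,
      iteratedDeriv 3
          (fun ω : ℝ => 2 * (1 - ω) + ω ^ 2 * ν + ω * Real.sqrt (ν * (4 - 4 * ω + ω ^ 2 * ν))) ω
        = -24 * (ω - 2) * (ν - 1) * Real.sqrt (ν * (ω ^ 2 * ν - 4 * ω + 4)) /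
            (ω ^ 2 * ν - 4 * ω + 4) ^ 3 ∧
      -24 * (ω - 2) * (ν - 1) * Real.sqrt (ν * (ω ^ 2 * ν - 4 * ω + 4)) /
          (ω ^ 2 * ν - 4 * ω + 4) ^ 3 < 0 := by
  intro ω hω
  obtain ⟨hw0, hw1⟩ := hω
  have hpω : 0 < ω^2*ν - 4*ω + 4 := by nlinarith [mul_pos (mul_pos hw0 hw0) hν]
  have hsω : 0 < Real.sqrt (ν*(ω^2*ν-4*ω+4)) := Real.sqrt_pos.mpr (mul_pos hν hpω)
  constructor
  · have hfg : (fun ω : ℝ => 2 * (1 - ω) + ω ^ 2 * ν + ω * Real.sqrt (ν * (4 - 4 * ω + ω ^ 2 * ν)))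
        = (fun y : ℝ => 2*(1-y)+y^2*ν+y*Real.sqrt (ν*(y^2*ν-4*y+4))) := by
      funext y
      rw [show ν * (4 - 4 * y + y ^ 2 * ν) = ν*(y^2*ν-4*y+4) by ring]
    rw [hfg]
    set U : Set ℝ := {x : ℝ | 0 < x^2*ν-4*x+4} with hUdef
    have hUopen : IsOpen U := isOpen_lt continuous_const (by continuity)
    have hωU : ω ∈ U := hpω
    have e1 : ∀ x ∈ U, deriv (fun y : ℝ => 2*(1-y)+y^2*ν+y*Real.sqrt (ν*(y^2*ν-4*y+4))) x
        = (fun x : ℝ => -2 + 2*ν*x + 2*(x^2*ν-3*x+2)*Real.sqrt (ν*(x^2*ν-4*x+4))/(x^2*ν-4*x+4)) x :=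
      fun x hx => (tdn_hd1 ν x hν hx).deriv
    have e2 : ∀ x ∈ U, deriv (fun y : ℝ => -2 + 2*ν*y + 2*(y^2*ν-3*y+2)*Real.sqrt (ν*(y^2*ν-4*y+4))/(y^2*ν-4*y+4)) x
        = (fun x : ℝ => 2*ν + 2*(x^3*ν^2-6*x^2*ν+6*x*ν+6*x-8)*Real.sqrt (ν*(x^2*ν-4*x+4))/(x^2*ν-4*x+4)^2) x :=
      fun x hx => (tdn_hd2 ν x hν hx).deriv
    have e12 : ∀ x ∈ U, deriv (deriv (fun y : ℝ => 2*(1-y)+y^2*ν+y*Real.sqrt (ν*(y^2*ν-4*y+4)))) x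
        = (fun x : ℝ => 2*ν + 2*(x^3*ν^2-6*x^2*ν+6*x*ν+6*x-8)*Real.sqrt (ν*(x^2*ν-4*x+4))/(x^2*ν-4*x+4)^2) x := by
      intro x hx
      rw [Filter.EventuallyEq.deriv_eq (Filter.eventuallyEq_of_mem (hUopen.mem_nhds hx) e1)]
      exact e2 x hx
    have e123 : deriv (deriv (deriv (fun y : ℝ => 2*(1-y)+y^2*ν+y*Real.sqrt (ν*(y^2*ν-4*y+4))))) ω
        = -24*(ω-2)*(ν-1)*Real.sqrt (ν*(ω^2*ν-4*ω+4))/(ω^2*ν-4*ω+4)^3 := by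
      rw [Filter.EventuallyEq.deriv_eq (Filter.eventuallyEq_of_mem (hUopen.mem_nhds hωU) e12)]
      exact (tdn_hd3 ν ω hν hωU).deriv
    rw [iteratedDeriv_succ, iteratedDeriv_succ, iteratedDeriv_one]
    exact e123
  · apply div_neg_of_neg_of_pos
    · nlinarith [mul_pos (mul_pos (show (0:ℝ) < 2-ω by linarith) (show (0:ℝ) < 1-ν by linarith)) hsω]
    · exact pow_pos hpω 3
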